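/- Let σ : Fin n → Fin n be a fixed-point-free involution (σ ∘ σ = id, σ i ≠ i) such that S i (σ i) is nonempty for every i. Then (1/2) · Σ_{i : Fin n} sInf { Q i a + Q (σ i) b : (a, b) ∈ S i (σ i) } is greater than or equal to the minimum of cost(f) over all feasible pairing schemes f; i.e., the minimum pairing-scheme sum power is no worse than the sum power of any matching. -/

import Mathlib

open MeasureTheory ProbabilityTheory

/-- Shannon entropy (in nats) of a random variable. -/
noncomputable def shEntropy {Ω : Type*} [MeasurableSpace Ω] {S : Type*}
    (μ : Measure Ω) (X : Ω → S) : ℝ :=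
  ∑' x : S, Real.negMulLog (μ (X ⁻¹' {x})).toReal

/-- Conditional Shannon entropy `H[X | Y]`. -/
noncomputable def shCondEntropy {Ω : Type*} [MeasurableSpace Ω] {S T : Type*}
    (μ : Measure Ω) (X : Ω → S) (Y : Ω → T) : ℝ :=
  ∑' y : T, (μ (Y ⁻¹' {y})).toReal * shEntropy (ProbabilityTheory.cond μ (Y ⁻¹' {y})) X

/-- The power needed at node `i` (channel gain `γ i`) to support rate `r` (in nats). -/
noncomputable def Qpow {n : ℕ} (γ : Fin n → ℝ) (i : Fin n) (r : ℝ) : ℝ :=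
  (Real.exp r - 1) / γ i

/-- The two-dimensional Slepian-Wolf region of the pair of sources `X i`, `X j`. -/
def SWregion {Ω S : Type*} [MeasurableSpace Ω] {n : ℕ}
    (μ : Measure Ω) (X : Fin n → Ω → S) (i j : Fin n) : Set (ℝ × ℝ) :=
  {q : ℝ × ℝ | q.1 ≥ shCondEntropy μ (X i) (X j) ∧ q.2 ≥ shCondEntropy μ (X j) (X i) ∧
    q.1 + q.2 ≥ shEntropy μ (fun ω => (X i ω, X j ω))}

/-- The Slepian-Wolf region intersected with the peak power constraints. -/
def Sregion {Ω S : Type*} [MeasurableSpace Ω] {n : ℕ}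
    (μ : Measure Ω) (X : Fin n → Ω → S) (γ : Fin n → ℝ) (Pmax : ℝ)
    (i j : Fin n) : Set (ℝ × ℝ) :=
  {q : ℝ × ℝ | q ∈ SWregion μ X i j ∧ Qpow γ i q.1 ≤ Pmax ∧ Qpow γ j q.2 ≤ Pmax}

/-- `X i` is initially decodable under `R` if `R i ≥ H[X i]`, or together with some
other source `X j` the rate pair `(R i, R j)` lies in their Slepian-Wolf region. -/
def InitiallyDecodable {Ω S : Type*} [MeasurableSpace Ω] {n : ℕ}
    (μ : Measure Ω) (X : Fin n → Ω → S) (R : Fin n → ℝ) (i : Fin n) : Prop :=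
  R i ≥ shEntropy μ (X i) ∨ ∃ j : Fin n, j ≠ i ∧ (R i, R j) ∈ SWregion μ X i j

/-- The generalized pairwise property: each source is initially decodable, or is
decodable via a chain of sources starting from an initially decodable one. -/
def GenPairwiseProperty {Ω S : Type*} [MeasurableSpace Ω] {n : ℕ}
    (μ : Measure Ω) (X : Fin n → Ω → S) (R : Fin n → ℝ) : Prop :=
  ∀ i : Fin n, InitiallyDecodable μ X R i ∨
    ∃ (k : ℕ) (s : ℕ → Fin n), 1 ≤ k ∧
      InitiallyDecodable μ X R (s 1) ∧
      (∀ j : ℕ, 2 ≤ j → j ≤ k → R (s j) ≥ shCondEntropy μ (X (s j)) (X (s (j - 1)))) ∧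
      R i ≥ shCondEntropy μ (X i) (X (s k))

/-- A rate assignment is generalized pairwise valid if it satisfies the generalized
pairwise property and every node meets the peak power constraint. -/
def GenPairwiseValid {Ω S : Type*} [MeasurableSpace Ω] {n : ℕ}
    (μ : Measure Ω) (X : Fin n → Ω → S) (γ : Fin n → ℝ) (Pmax : ℝ)
    (R : Fin n → ℝ) : Prop :=
  GenPairwiseProperty μ X R ∧ ∀ i : Fin n, Qpow γ i (R i) ≤ Pmax

/-- The decoding relation of a rate assignment: `a` can help decode `b` if
`H[X b | X a] ≤ R b`. -/
def decRel {Ω S : Type*} [MeasurableSpace Ω] {n : ℕ}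
    (μ : Measure Ω) (X : Fin n → Ω → S) (R : Fin n → ℝ) : Fin n → Fin n → Prop :=
  fun a b => shCondEntropy μ (X b) (X a) ≤ R b

/-- The mode of a node in a pairing scheme: a root (transmitting at full entropy),
a child of some node `j` (transmitting at conditional entropy given `X j`), or
matched with some node `j` (jointly decoded with `X j`). -/
inductive PairMode (n : ℕ) where
  | root : PairMode n
  | child (j : Fin n) : PairMode n
  | matched (j : Fin n) : PairMode n
deriving DecidableEq

/-- A pairing scheme: each node is a root, a child of another node, or matched with
another node; matching is symmetric, no two nodes are children of each other, and the
associated undirected graph is acyclic. -/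
structure PairingScheme (n : ℕ) where
  mode : Fin n → PairMode n
  child_ne : ∀ i j : Fin n, mode i = PairMode.child j → j ≠ i
  matched_ne : ∀ i j : Fin n, mode i = PairMode.matched j → j ≠ i
  matched_symm : ∀ i j : Fin n, mode i = PairMode.matched j ↔ mode j = PairMode.matched i
  no_mutual_child : ∀ i j : Fin n, i ≠ j →
    ¬(mode i = PairMode.child j ∧ mode j = PairMode.child i)
  acyclic : (SimpleGraph.fromRel fun i j =>
    mode i = PairMode.matched j ∨ mode i = PairMode.child j ∨
      mode j = PairMode.child i).IsAcyclic

/-- A pairing scheme is feasible if all the prescribed transmissions can be realized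
within the peak power constraint. -/
def PairingScheme.Feasible {Ω S : Type*} [MeasurableSpace Ω] {n : ℕ}
    (f : PairingScheme n) (μ : Measure Ω) (X : Fin n → Ω → S) (γ : Fin n → ℝ)
    (Pmax : ℝ) : Prop :=
  (∀ i : Fin n, f.mode i = PairMode.root → Qpow γ i (shEntropy μ (X i)) ≤ Pmax) ∧
  (∀ i j : Fin n, f.mode i = PairMode.child j →
    Qpow γ i (shCondEntropy μ (X i) (X j)) ≤ Pmax) ∧
  (∀ i j : Fin n, f.mode i = PairMode.matched j →
    (Sregion μ X γ Pmax i j).Nonempty)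

/-- The minimum sum power of a jointly decoded pair `(i, j)`. -/
noncomputable def pairPower {Ω S : Type*} [MeasurableSpace Ω] {n : ℕ}
    (μ : Measure Ω) (X : Fin n → Ω → S) (γ : Fin n → ℝ) (Pmax : ℝ)
    (i j : Fin n) : ℝ :=
  sInf {x : ℝ | ∃ a b : ℝ, (a, b) ∈ Sregion μ X γ Pmax i j ∧ x = Qpow γ i a + Qpow γ j b}

/-- The power contribution of node `i` in a pairing scheme; each member of a matched
pair contributes half of the pair power, so that the pair is counted once in total. -/
noncomputable def schemeContrib {Ω S : Type*} [MeasurableSpace Ω] {n : ℕ}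
    (μ : Measure Ω) (X : Fin n → Ω → S) (γ : Fin n → ℝ) (Pmax : ℝ)
    (f : PairingScheme n) (i : Fin n) : ℝ :=
  match f.mode i with
  | PairMode.root => Qpow γ i (shEntropy μ (X i))
  | PairMode.child j => Qpow γ i (shCondEntropy μ (X i) (X j))
  | PairMode.matched j => (1 / 2) * pairPower μ X γ Pmax i j

/-- The total cost (sum power) of a feasible pairing scheme: roots contribute the power
of their entropy, children the power of their conditional entropy, and each matched
pair (counted once) its minimum sum power. -/
noncomputable def schemeCost {Ω S : Type*} [MeasurableSpace Ω] {n : ℕ}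
    (μ : Measure Ω) (X : Fin n → Ω → S) (γ : Fin n → ℝ) (Pmax : ℝ)
    (f : PairingScheme n) : ℝ :=
  ∑ i : Fin n, schemeContrib μ X γ Pmax f i


/-! ### Auxiliary lemmas for the main theorem -/

private lemma pairMode_finite (n : ℕ) : Finite (PairMode n) := by
  apply Finite.of_injective (fun m : PairMode n =>
    match m with
    | PairMode.root => (none : Option (Fin n ⊕ Fin n))
    | PairMode.child j => some (Sum.inl j)
    | PairMode.matched j => some (Sum.inr j))
  intro a b h
  cases a <;> cases b <;> simp_all

private instance pairingScheme_finite (n : ℕ) : Finite (PairingScheme n) := by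
  have := pairMode_finite n
  apply Finite.of_injective PairingScheme.mode
  intro f g h
  cases f; cases g; cases h; rfl

private lemma matching_walk_support {n : ℕ} {G : SimpleGraph (Fin n)}
    (σ : Fin n → Fin n) (hσ2 : ∀ i, σ (σ i) = i)
    (hadj : ∀ {i j : Fin n}, G.Adj i j → j = σ i) :
    ∀ {a b : Fin n} (p : G.Walk a b) (x : Fin n), x ∈ p.support → x = a ∨ x = σ a := by
  intro a b p
  induction p with
  | nil => intro x hx; simp only [SimpleGraph.Walk.support_nil, List.mem_singleton] at hx
           exact Or.inl hx
  | @cons u c b h q ih =>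
    intro x hx
    rw [SimpleGraph.Walk.support_cons, List.mem_cons] at hx
    rcases hx with rfl | hx
    · exact Or.inl rfl
    · have hc : c = σ u := hadj h
      rcases ih x hx with h1 | h1
      · exact Or.inr (by rw [h1, hc])
      · exact Or.inl (by rw [h1, hc, hσ2])

/-- The pairing scheme induced by a fixed-point-free involution. -/
private def sigmaScheme {n : ℕ} (σ : Fin n → Fin n) (hσ2 : ∀ i, σ (σ i) = i)
    (hσ' : ∀ i, σ i ≠ i) : PairingScheme n where
  mode i := PairMode.matched (σ i)
  child_ne := by intro i j h; simp at h
  matched_ne := by intro i j h; simp at h; subst h; exact hσ' i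
  matched_symm := by
    intro i j
    simp only [PairMode.matched.injEq]
    constructor
    · rintro rfl; exact hσ2 i
    · rintro rfl; exact hσ2 j
  no_mutual_child := by intro i j _ h; simp at h
  acyclic := by
    have hadj : ∀ {i j : Fin n},
        (SimpleGraph.fromRel fun a b =>
          PairMode.matched (σ a) = PairMode.matched b ∨
          PairMode.matched (σ a) = PairMode.child b ∨
          PairMode.matched (σ b) = PairMode.child a).Adj i j → j = σ i := by
      intro i j h
      rcases h with ⟨hne, h | h⟩ <;> simp only [PairMode.matched.injEq,
        reduceCtorEq, or_false, false_or] at h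
      · exact h.symm
      · rw [← h, hσ2]
    intro v c hc
    have h3 := hc.three_le_length
    have hnodup := hc.support_nodup
    have hsub : c.support.tail.toFinset ⊆ ({v, σ v} : Finset (Fin n)) := by
      intro x hx
      rw [List.mem_toFinset] at hx
      have := matching_walk_support σ hσ2 hadj c x (List.mem_of_mem_tail hx)
      simp only [Finset.mem_insert, Finset.mem_singleton]
      exact this
    have hcard : c.support.tail.toFinset.card ≤ 2 :=
      le_trans (Finset.card_le_card hsub)
        (le_trans (Finset.card_insert_le _ _) (by simp))
    rw [List.toFinset_card_of_nodup hnodup] at hcard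
    have hlen : c.support.tail.length = c.length := by
      have h1 := SimpleGraph.Walk.length_support c
      have h2 := List.length_tail (l := c.support)
      omega
    omega

/-- The minimum pairing-scheme sum power is no worse than the sum power of any
matching given by a fixed-point-free involution. -/
theorem minSchemeCost_le_matching_power
    {Ω S : Type*} [MeasurableSpace Ω] [MeasurableSpace S] [MeasurableSingletonClass S]
    (μ : Measure Ω) [IsProbabilityMeasure μ] {n : ℕ} (hn : 1 ≤ n)
    (X : Fin n → Ω → S) (hX : ∀ i, Measurable (X i))
    (hfin : ∀ i, (Set.range (X i)).Finite)
    (γ : Fin n → ℝ) (hγ : ∀ i, 0 < γ i) (Pmax : ℝ) (hP : 0 < Pmax)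
    (hneven : Even n)
    (σ : Fin n → Fin n) (hσ : σ ∘ σ = id) (hσ' : ∀ i, σ i ≠ i)
    (hS : ∀ i : Fin n, (Sregion μ X γ Pmax i (σ i)).Nonempty) :
    ∃ m : ℝ,
      IsLeast {c : ℝ | ∃ f : PairingScheme n, f.Feasible μ X γ Pmax ∧
        c = schemeCost μ X γ Pmax f} m ∧
      m ≤ (1 / 2) * ∑ i : Fin n, pairPower μ X γ Pmax i (σ i) := by
  have hσ2 : ∀ i, σ (σ i) = i := fun i => congrFun hσ i
  set f₀ : PairingScheme n := sigmaScheme σ hσ2 hσ' with hf₀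
  have hfeas : f₀.Feasible μ X γ Pmax := by
    refine ⟨?_, ?_, ?_⟩
    · intro i h; simp [hf₀, sigmaScheme] at h
    · intro i j h; simp [hf₀, sigmaScheme] at h
    · intro i j h
      simp only [hf₀, sigmaScheme, PairMode.matched.injEq] at h
      subst h; exact hS i
  have hcost : schemeCost μ X γ Pmax f₀
      = (1 / 2) * ∑ i : Fin n, pairPower μ X γ Pmax i (σ i) := by
    rw [schemeCost, Finset.mul_sum]
    exact Finset.sum_congr rfl (fun i _ => by simp [schemeContrib, hf₀, sigmaScheme])
  set C : Set ℝ := {c : ℝ | ∃ f : PairingScheme n, f.Feasible μ X γ Pmax ∧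
      c = schemeCost μ X γ Pmax f} with hC
  have hmem : schemeCost μ X γ Pmax f₀ ∈ C := ⟨f₀, hfeas, rfl⟩
  have hCfin : C.Finite := by
    apply Set.Finite.subset (Set.finite_range (schemeCost μ X γ Pmax))
    rintro c ⟨f, _, rfl⟩
    exact ⟨f, rfl⟩
  have hne : C.Nonempty := ⟨_, hmem⟩
  refine ⟨sInf C, ⟨hne.csInf_mem hCfin, fun c hc => csInf_le hCfin.bddBelow hc⟩, ?_⟩
  rw [← hcost]
  exact csInf_le hCfin.bddBelow hmem
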